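/- There exists a constant C₀ > 0, independent of m and z, such that for every integer m ≥ 1 and every z ∈ (0,1] at which the derivative of T^m exists, |(T^m)'(z)| ≥ C₀ · ( T^m z / z )^{1+α}. -/

import Mathlib

open Set Filter Topology

set_option maxHeartbeats 1000000



private lemma auxIM_low (α t : ℝ) (hα0 : 0 < α) (hα1 : α < 1) (ht0 : 0 < t) (ht : t ≤ 1/2) :
    (2:ℝ) ^ (-α) + Real.log 2 ≤ t ^ α - Real.log t := by
  set s : ℝ := 2 * t with hs
  have hs0 : 0 < s := by positivity
  have hs1 : s ≤ 1 := by rw [hs]; linarith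
  have hts : t = s / 2 := by rw [hs]; ring
  have h1 : t ^ α = s ^ α * (2:ℝ) ^ (-α) := by
    rw [hts, div_eq_mul_inv, Real.mul_rpow hs0.le (by norm_num),
      Real.inv_rpow (by norm_num), ← Real.rpow_neg (by norm_num)]
  have h2 : Real.log t = Real.log s - Real.log 2 := by
    rw [hts, Real.log_div hs0.ne' (by norm_num)]
  have key : α * Real.log s ≤ s ^ α - 1 := by
    have h := Real.log_le_sub_one_of_pos (show (0:ℝ) < s ^ α by positivity)
    rwa [Real.log_rpow hs0] at h
  have hsα1 : s ^ α ≤ 1 := Real.rpow_le_one hs0.le hs1 hα0.le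
  have h2α : (2:ℝ) ^ (-α) ≤ 1 := Real.rpow_le_one_of_one_le_of_nonpos (by norm_num) (by linarith)
  have h2αpos : (0:ℝ) < (2:ℝ) ^ (-α) := by positivity
  rw [h1, h2]
  nlinarith [mul_nonneg (sub_nonneg.2 hsα1) (sub_nonneg.2 (show α * (2:ℝ)^(-α) ≤ 1 by nlinarith))]

private lemma auxIM_high (α t : ℝ) (hα0 : 0 < α) (hα1 : α < 1) (ht0 : 1/2 < t) (ht : t ≤ 1) :
    t ^ α - Real.log t ≤ (2:ℝ) ^ (-α) + Real.log 2 := by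
  set s : ℝ := 2 * t with hs
  have hs0 : (0:ℝ) < s := by positivity
  have hs1 : 1 ≤ s := by rw [hs]; linarith
  have hs2 : s ≤ 2 := by rw [hs]; linarith
  have hts : t = s / 2 := by rw [hs]; ring
  have h1 : t ^ α = s ^ α * (2:ℝ) ^ (-α) := by
    rw [hts, div_eq_mul_inv, Real.mul_rpow hs0.le (by norm_num),
      Real.inv_rpow (by norm_num), ← Real.rpow_neg (by norm_num)]
  have h2 : Real.log t = Real.log s - Real.log 2 := by
    rw [hts, Real.log_div hs0.ne' (by norm_num)]
  set w : ℝ := s ^ α with hw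
  have hw1 : 1 ≤ w := by
    rw [hw]
    calc (1:ℝ) = s ^ (0:ℝ) := (Real.rpow_zero s).symm
      _ ≤ s ^ α := Real.rpow_le_rpow_of_exponent_le hs1 hα0.le
  have hw2 : w ≤ 2 ^ α := by
    rw [hw]; exact Real.rpow_le_rpow hs0.le hs2 hα0.le
  have hlogs : 0 ≤ Real.log s := Real.log_nonneg hs1
  have key : -α * Real.log s ≤ w⁻¹ - 1 := by
    have h := Real.log_le_sub_one_of_pos (show (0:ℝ) < s ^ (-α) by positivity)
    rw [Real.log_rpow hs0] at h
    rwa [Real.rpow_neg hs0.le, ← hw] at h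
  have hwpos : (0:ℝ) < w := lt_of_lt_of_le one_pos hw1
  have key3 : w - 1 ≤ α * (w * Real.log s) := by
    have := mul_le_mul_of_nonneg_left key hwpos.le
    have hinv : w * w⁻¹ = 1 := mul_inv_cancel₀ hwpos.ne'
    nlinarith
  have h21 : (2:ℝ) ^ (-α) * (2:ℝ) ^ α = 1 := by
    rw [← Real.rpow_add (by norm_num : (0:ℝ) < 2)]; simp
  have h2αpos : (0:ℝ) < (2:ℝ) ^ (-α) := by positivity
  have hαw1 : α * (2:ℝ) ^ (-α) * w ≤ 1 := by
    have hmm := mul_le_mul_of_nonneg_left hw2 (show (0:ℝ) ≤ α * (2:ℝ)^(-α) by positivity)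
    nlinarith
  have main : (2:ℝ) ^ (-α) * (w - 1) ≤ Real.log s := by
    calc (2:ℝ) ^ (-α) * (w - 1) ≤ (2:ℝ) ^ (-α) * (α * (w * Real.log s)) :=
          mul_le_mul_of_nonneg_left key3 h2αpos.le
      _ = (α * (2:ℝ) ^ (-α) * w) * Real.log s := by ring
      _ ≤ 1 * Real.log s := mul_le_mul_of_nonneg_right hαw1 hlogs
      _ = Real.log s := one_mul _
  rw [h1, h2]
  nlinarith

private lemma auxIM_E (α u : ℝ) (hα0 : 0 < α) (hα1 : α < 1) (hu0 : 0 ≤ u) (hu1 : u ≤ 1) :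
    (1+α) * Real.log (1+u) ≤ Real.log (1+(1+α)*u)
      + (1+α) * ((2:ℝ) ^ (-α) * (u * ((1+u) ^ α - 1))) := by
  set G : ℝ → ℝ := fun v => Real.log (1+(1+α)*v) - (1+α) * Real.log (1+v)
      + (1+α) * ((2:ℝ) ^ (-α) * (v * ((1+v) ^ α - 1))) with hGdef
  have hG0 : G 0 = 0 := by simp [hGdef]
  set G' : ℝ → ℝ := fun v => (1+α)/(1+(1+α)*v) - (1+α) * (1/(1+v))
      + (1+α) * ((2:ℝ) ^ (-α) * (1 * ((1+v) ^ α - 1) + v * (α * (1+v) ^ (α-1) * 1))) with hG'def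
  have hder : ∀ v : ℝ, 0 ≤ v → HasDerivAt G (G' v) v := by
    intro v hv
    have hv1 : (0:ℝ) < 1 + v := by linarith
    have hv2 : (0:ℝ) < 1 + (1+α)*v := by nlinarith
    have d1 : HasDerivAt (fun y : ℝ => 1+(1+α)*y) (1+α) v := by
      simpa using ((hasDerivAt_id v).const_mul (1+α)).const_add 1
    have l1 : HasDerivAt (fun y : ℝ => Real.log (1+(1+α)*y)) ((1+α)/(1+(1+α)*v)) v :=
      d1.log hv2.ne'
    have d2 : HasDerivAt (fun y : ℝ => 1+y) 1 v := by
      simpa using (hasDerivAt_id v).const_add 1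
    have l2 : HasDerivAt (fun y : ℝ => Real.log (1+y)) (1/(1+v)) v := d2.log hv1.ne'
    have r1 : HasDerivAt (fun y : ℝ => (1+y) ^ α) (α * (1+v) ^ (α-1) * 1) v := by
      have := (Real.hasDerivAt_rpow_const (x := 1+v) (p := α) (Or.inl hv1.ne')).comp v d2
      exact this
    have r2 : HasDerivAt (fun y : ℝ => y * ((1+y) ^ α - 1))
        (1 * ((1+v) ^ α - 1) + v * (α * (1+v) ^ (α-1) * 1)) v :=
      (hasDerivAt_id v).mul (r1.sub_const 1)
    exact (l1.sub (l2.const_mul (1+α))).add ((r2.const_mul ((2:ℝ)^(-α))).const_mul (1+α))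
  have hmono : MonotoneOn G (Icc (0:ℝ) 1) := by
    apply monotoneOn_of_deriv_nonneg (convex_Icc 0 1)
    · intro v hv
      exact (hder v hv.1).continuousAt.continuousWithinAt
    · intro v hv
      rw [interior_Icc] at hv
      exact (hder v hv.1.le).differentiableAt.differentiableWithinAt
    · intro v hv
      rw [interior_Icc] at hv
      rw [(hder v hv.1.le).deriv]
      -- show 0 ≤ G' v
      have hv0 : 0 < v := hv.1
      have hv1 : (0:ℝ) < 1 + v := by linarith
      have hv2 : (0:ℝ) < 1 + (1+α)*v := by nlinarith
      have hv2' : (1:ℝ) ≤ 1 + (1+α)*v := by nlinarith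
      set w : ℝ := (1+v) ^ α with hw
      have hwpos : 0 < w := by rw [hw]; positivity
      have hw1 : 1 ≤ w := by
        rw [hw]
        calc (1:ℝ) = (1+v) ^ (0:ℝ) := (Real.rpow_zero _).symm
          _ ≤ (1+v) ^ α := Real.rpow_le_rpow_of_exponent_le (by linarith) hα0.le
      have hαw : (1+v) ^ (α-1) = w / (1+v) := by
        rw [hw, Real.rpow_sub hv1, Real.rpow_one]
      have hB : (1+v) ^ (1-α) ≤ 1 + (1-α)*v :=
        rpow_one_add_le_one_add_mul_self (by linarith) (by linarith) (by linarith)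
      have h1α : (1+v) ^ (1-α) = (1+v) / w := by
        rw [hw, Real.rpow_sub hv1, Real.rpow_one]
      have hA : α*v*w ≤ (w-1)*(1+v) := by
        rw [h1α, div_le_iff₀ hwpos] at hB
        nlinarith
      have h2α : (1:ℝ)/2 ≤ (2:ℝ) ^ (-α) := by
        calc (1:ℝ)/2 = (2:ℝ) ^ (-1 : ℝ) := by
              rw [Real.rpow_neg_one]; norm_num
          _ ≤ (2:ℝ) ^ (-α) := Real.rpow_le_rpow_of_exponent_le (by norm_num) (by linarith)
      have h2αpos : (0:ℝ) < (2:ℝ) ^ (-α) := by positivity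
      have hfrac : (1+α)/(1+(1+α)*v) - (1+α)*(1/(1+v))
          = -(((1+α)*α*v)/((1+v)*(1+(1+α)*v))) := by
        field_simp
        ring
      have ht1 : 2*(α*v*w/(1+v)) ≤ 1 * ((1+v) ^ α - 1) + v * (α * (1+v) ^ (α-1) * 1) := by
        rw [hαw, ← hw]
        have h5 : α*v*w/(1+v) ≤ w - 1 := by
          rw [div_le_iff₀ hv1]; nlinarith
        have h6 : v * (α * (w/(1+v)) * 1) = α*v*w/(1+v) := by ring
        linarith [h6.ge]
      have hxw : (0:ℝ) ≤ α*v*w/(1+v) := by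
        apply div_nonneg _ hv1.le
        positivity
      have key : ((1+α)*α*v)/((1+v)*(1+(1+α)*v))
          ≤ (1+α) * ((2:ℝ) ^ (-α) * (1 * ((1+v) ^ α - 1) + v * (α * (1+v) ^ (α-1) * 1))) := by
        calc ((1+α)*α*v)/((1+v)*(1+(1+α)*v))
            ≤ ((1+α)*α*v)/(1+v) := by
              rw [show ((1+α)*α*v)/((1+v)*(1+(1+α)*v)) = (((1+α)*α*v)/(1+v))/(1+(1+α)*v) by
                rw [div_div]]
              exact div_le_self (by positivity) hv2'
          _ ≤ ((1+α)*α*v*w)/(1+v) := by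
              apply (div_le_div_iff_of_pos_right hv1).mpr
              nlinarith [mul_nonneg (mul_nonneg (mul_nonneg
                (show (0:ℝ) ≤ 1+α by linarith) hα0.le) hv0.le) (sub_nonneg.2 hw1)]
          _ = (1+α)*((1/2)*(2*(α*v*w/(1+v)))) := by ring
          _ ≤ (1+α) * ((2:ℝ) ^ (-α) * (1 * ((1+v) ^ α - 1) + v * (α * (1+v) ^ (α-1) * 1))) := by
              apply mul_le_mul_of_nonneg_left _ (show (0:ℝ) ≤ 1+α by linarith)
              exact mul_le_mul h2α ht1 (by linarith) h2αpos.le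
      show (0:ℝ) ≤ G' v
      simp only [hG'def]
      linarith [hfrac, key]
  have := hmono (show (0:ℝ) ∈ Icc (0:ℝ) 1 by norm_num) (show u ∈ Icc (0:ℝ) 1 from ⟨hu0, hu1⟩) hu0
  rw [hG0] at this
  simp only [hGdef] at this
  linarith

noncomputable def phiIM (α x : ℝ) : ℝ :=
  if x ≤ 1/2 then x ^ α else Real.log x + (2:ℝ) ^ (-α) + Real.log 2

noncomputable def FIM (α x : ℝ) : ℝ := Real.exp ((1+α) * (Real.log x - phiIM α x))

private lemma phiIM_nonneg (α x : ℝ) (hα0 : 0 < α) (hx0 : 0 < x) (hx1 : x ≤ 1) :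
    0 ≤ phiIM α x := by
  unfold phiIM
  split_ifs with h
  · positivity
  · push_neg at h
    have h1 : Real.log (1/2 : ℝ) ≤ Real.log x := Real.log_le_log (by norm_num) h.le
    have h2 : Real.log (1/2 : ℝ) = -Real.log 2 := by
      rw [show (1/2 : ℝ) = 2⁻¹ by norm_num, Real.log_inv]
    have h3 : (0:ℝ) < (2:ℝ) ^ (-α) := by positivity
    linarith

private lemma phiIM_le_two (α x : ℝ) (hα0 : 0 < α) (hα1 : α < 1) (hx0 : 0 < x) (hx1 : x ≤ 1) :
    phiIM α x ≤ 2 := by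
  unfold phiIM
  split_ifs with h
  · have := Real.rpow_le_one hx0.le hx1 hα0.le
    linarith
  · have h1 : Real.log x ≤ 0 := Real.log_nonpos hx0.le hx1
    have h2 : (2:ℝ) ^ (-α) ≤ 1 := Real.rpow_le_one_of_one_le_of_nonpos (by norm_num) (by linarith)
    have h3 : Real.log 2 ≤ 1 := by
      have := Real.log_two_lt_d9
      linarith
    linarith
/-- **Derivative lower bound** (inequality (BSD)): there is `C₀ > 0`,
independent of `m` and `z`, such that for every `m ≥ 1` and every
`z ∈ (0,1]` at which `T^m` is differentiable,
`|(T^m)'(z)| ≥ C₀ (T^m z / z)^{1+α}`. -/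
theorem iterate_derivative_lower_bound_intermittent_map
    (α : ℝ) (hα0 : 0 < α) (hα1 : α < 1)
    (T : ℝ → ℝ) (hT_maps : MapsTo T (Icc (0:ℝ) 1) (Icc (0:ℝ) 1))
    (hT_formula : ∀ x ∈ Ico (0:ℝ) (1/2), T x = x + (2:ℝ) ^ α * x ^ (1 + α))
    (T' : ℝ → ℝ)
    (hT_deriv : ∀ x ∈ Icc (0:ℝ) 1, x ≠ 1/2 → HasDerivAt T (T' x) x)
    (hT_C2 : ContDiffOn ℝ 2 T (Icc (1/2:ℝ) 1))
    (hT_bij : BijOn T (Icc (1/2:ℝ) 1) (Icc (0:ℝ) 1))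
    (hT_expanding : ∀ x ∈ Icc (1/2:ℝ) 1, 1 < |T' x|)
    -- Markov partition points x_ℓ and atoms I_ℓ = (x_{ℓ+1}, x_ℓ]
    (xpt : ℕ → ℝ) (hx0 : xpt 0 = 1) (hx1 : xpt 1 = 1/2)
    (hxpos : ∀ ℓ, 0 < xpt ℓ) (hxdec : ∀ ℓ, xpt (ℓ + 1) < xpt ℓ)
    (hxpre : ∀ ℓ, 2 ≤ ℓ → xpt ℓ ∈ Ioo (0:ℝ) (1/2) ∧ T (xpt ℓ) = xpt (ℓ - 1)) :
    ∃ C₀ > (0:ℝ), ∀ m : ℕ, 1 ≤ m → ∀ z ∈ Ioc (0:ℝ) 1, ∀ Dm : ℝ,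
      HasDerivAt (T^[m]) Dm z →
      C₀ * (T^[m] z / z) ^ (1 + α) ≤ |Dm| := by
  classical
  -- basic facts about T on the left branch
  have hT0 : T 0 = 0 := by
    have h := hT_formula 0 (by constructor <;> norm_num)
    rw [h, Real.zero_rpow (by positivity : (1:ℝ)+α ≠ 0)]
    ring
  have hTleft : ∀ x : ℝ, 0 < x → x < 1/2 → T x = x * (1 + (2*x) ^ α) := by
    intro x hx0 hx2
    have hf := hT_formula x ⟨hx0.le, hx2⟩
    have h2 : (2*x) ^ α = 2 ^ α * x ^ α := Real.mul_rpow (by norm_num) hx0.le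
    have h3 : x ^ ((1:ℝ)+α) = x * x ^ α := by
      rw [Real.rpow_add hx0, Real.rpow_one]
    rw [hf, h3, h2]; ring
  have hT'left : ∀ x : ℝ, 0 < x → x < 1/2 → T' x = 1 + (1+α) * (2*x) ^ α := by
    intro x hx0 hx2
    have hd0 : HasDerivAt (fun y : ℝ => y + 2 ^ α * y ^ ((1:ℝ)+α))
        (1 + 2 ^ α * (((1:ℝ)+α) * x ^ ((1:ℝ)+α-1))) x :=
      (hasDerivAt_id x).add ((Real.hasDerivAt_rpow_const (Or.inl hx0.ne')).const_mul ((2:ℝ) ^ α))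
    have hev : T =ᶠ[nhds x] (fun y : ℝ => y + 2 ^ α * y ^ ((1:ℝ)+α)) := by
      filter_upwards [isOpen_Ioo.mem_nhds (⟨hx0, hx2⟩ : x ∈ Ioo (0:ℝ) (1/2))] with y hy
      exact hT_formula y ⟨hy.1.le, hy.2⟩
    have hd1 : HasDerivAt T (1 + 2 ^ α * (((1:ℝ)+α) * x ^ ((1:ℝ)+α-1))) x :=
      hd0.congr_of_eventuallyEq hev
    have hd2 := hT_deriv x ⟨hx0.le, by linarith⟩ (by intro h; rw [h] at hx2; norm_num at hx2)
    have huniq := hd2.unique hd1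
    rw [huniq, show (1:ℝ)+α-1 = α by ring,
      Real.mul_rpow (by norm_num : (0:ℝ) ≤ 2) hx0.le]
    ring
  have hT'posleft : ∀ x : ℝ, 0 < x → x < 1/2 → 0 < T' x := by
    intro x hx0 hx2
    rw [hT'left x hx0 hx2]
    have : (0:ℝ) ≤ (2*x) ^ α := Real.rpow_nonneg (by linarith) α
    nlinarith
  have hT'ne0 : ∀ x : ℝ, 0 < x → x ≤ 1 → x ≠ 1/2 → T' x ≠ 0 := by
    intro x hx0 hx1 hne
    rcases lt_or_gt_of_ne hne with hlt | hgt
    · exact (hT'posleft x hx0 hlt).ne'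
    · have h := hT_expanding x ⟨hgt.le, hx1⟩
      intro h0; rw [h0] at h; norm_num at h
  -- the one-step inequality
  have hstep : ∀ x : ℝ, 0 < x → x ≤ 1 → x ≠ 1/2 → 0 < T x → T x ≤ 1 →
      FIM α (T x) ≤ |T' x| * FIM α x := by
    intro x hx0 hx1 hne hTx0 hTx1
    have habs : 0 < |T' x| := abs_pos.mpr (hT'ne0 x hx0 hx1 hne)
    rw [FIM, FIM, ← Real.exp_log habs, ← Real.exp_add, Real.exp_le_exp]
    rcases lt_or_gt_of_ne hne with hlt | hgt
    · -- left branch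
      set u : ℝ := (2*x) ^ α with hu
      have hu0 : 0 < u := by rw [hu]; positivity
      have hu1 : u ≤ 1 := Real.rpow_le_one (by linarith) (by linarith) hα0.le
      have hTx : T x = x * (1+u) := hTleft x hx0 hlt
      have hT'x : T' x = 1 + (1+α) * u := hT'left x hx0 hlt
      have hT'pos : 0 < T' x := hT'posleft x hx0 hlt
      have hlogT' : Real.log |T' x| = Real.log (1+(1+α)*u) := by
        rw [abs_of_pos hT'pos, hT'x]
      have h2c : (2:ℝ) ^ (-α) * (2:ℝ) ^ α = 1 := by
        rw [← Real.rpow_add (by norm_num : (0:ℝ) < 2)]; simp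
      have hxα : x ^ α = (2:ℝ) ^ (-α) * u := by
        rw [hu, Real.mul_rpow (by norm_num : (0:ℝ) ≤ 2) hx0.le, ← mul_assoc, h2c, one_mul]
      have hlogTx : Real.log (T x) = Real.log x + Real.log (1+u) := by
        rw [hTx, Real.log_mul hx0.ne' (by positivity)]
      have hTxα : (T x) ^ α = x ^ α * (1+u) ^ α := by
        rw [hTx, Real.mul_rpow hx0.le (by positivity)]
      have hφx : phiIM α x = x ^ α := if_pos hlt.le
      have hE := auxIM_E α u hα0 hα1 hu0.le hu1
      have main : (1+α) * (Real.log (T x) - (T x) ^ α)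
          ≤ Real.log (1+(1+α)*u) + (1+α) * (Real.log x - phiIM α x) := by
        rw [hφx, hlogTx, hTxα, hxα]
        nlinarith [hE]
      by_cases hTx2 : T x ≤ 1/2
      · have hφTx : phiIM α (T x) = (T x) ^ α := if_pos hTx2
        rw [hφTx, hlogT']
        linarith [main]
      · push_neg at hTx2
        have hφTx : phiIM α (T x) = Real.log (T x) + (2:ℝ)^(-α) + Real.log 2 :=
          if_neg (not_le.mpr hTx2)
        have hhigh := auxIM_high α (T x) hα0 hα1 hTx2 hTx1
        have h' := mul_le_mul_of_nonneg_left
          (show -((2:ℝ)^(-α) + Real.log 2) ≤ Real.log (T x) - (T x)^α by linarith)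
          (show (0:ℝ) ≤ 1+α by linarith)
        rw [hφTx, hlogT']
        nlinarith [main, h']
    · -- right branch
      have hexp := hT_expanding x ⟨hgt.le, hx1⟩
      have hlogT' : 0 ≤ Real.log |T' x| := Real.log_nonneg hexp.le
      have hφx : phiIM α x = Real.log x + (2:ℝ)^(-α) + Real.log 2 := if_neg (not_le.mpr hgt)
      by_cases hTx2 : T x ≤ 1/2
      · have hφTx : phiIM α (T x) = (T x) ^ α := if_pos hTx2
        have hlow := auxIM_low α (T x) hα0 hα1 hTx0 hTx2
        have h' := mul_le_mul_of_nonneg_left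
          (show Real.log (T x) - (T x)^α + ((2:ℝ)^(-α) + Real.log 2) ≤ 0 by linarith)
          (show (0:ℝ) ≤ 1+α by linarith)
        rw [hφTx, hφx]
        nlinarith [h', hlogT']
      · push_neg at hTx2
        have hφTx : phiIM α (T x) = Real.log (T x) + (2:ℝ)^(-α) + Real.log 2 :=
          if_neg (not_le.mpr hTx2)
        rw [hφTx, hφx]
        nlinarith [hlogT']
  refine ⟨Real.exp (-6), Real.exp_pos _, ?_⟩
  intro m hm z hz Dm hD
  have hz0 : 0 < z := hz.1
  have hz1 : z ≤ 1 := hz.2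
  have horb : ∀ i, T^[i] z ∈ Icc (0:ℝ) 1 := by
    intro i; induction i with
    | zero => simpa using ⟨hz0.le, hz1⟩
    | succ n ih => rw [Function.iterate_succ_apply']; exact hT_maps ih
  have hiter0 : ∀ n : ℕ, T^[n] (0:ℝ) = 0 := by
    intro n; induction n with
    | zero => simp
    | succ n ih => rw [Function.iterate_succ_apply', ih, hT0]
  have hzero : ∀ i j : ℕ, i ≤ j → T^[i] z = 0 → T^[j] z = 0 := by
    intro i j hij h0
    obtain ⟨d, rfl⟩ := Nat.exists_eq_add_of_le hij
    rw [add_comm, Function.iterate_add_apply, h0, hiter0]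
  by_cases hzm0 : T^[m] z = 0
  · rw [hzm0, zero_div, Real.zero_rpow (by positivity : (1:ℝ)+α ≠ 0), mul_zero]
    exact abs_nonneg Dm
  have hne0 : ∀ i, i ≤ m → T^[i] z ≠ 0 := fun i hi h0 => hzm0 (hzero i m hi h0)
  have hIoc : ∀ i, i ≤ m → 0 < T^[i] z :=
    fun i hi => lt_of_le_of_ne (horb i).1 (Ne.symm (hne0 i hi))
  have hchainD : ∀ k : ℕ, (∀ i, i < k → T^[i] z ≠ 1/2) →
      HasDerivAt (T^[k]) (∏ i ∈ Finset.range k, T' (T^[i] z)) z := by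
    intro k
    induction k with
    | zero => intro _; simpa using hasDerivAt_id z
    | succ n ih =>
      intro hk
      have hd : HasDerivAt T (T' (T^[n] z)) (T^[n] z) :=
        hT_deriv _ (horb n) (hk n (Nat.lt_succ_self n))
      have hcomp := hd.comp z (ih fun i hi => hk i (Nat.lt_succ_of_lt hi))
      have hprodeq : ∏ i ∈ Finset.range (n+1), T' (T^[i] z)
          = T' (T^[n] z) * ∏ i ∈ Finset.range n, T' (T^[i] z) := by
        rw [Finset.prod_range_succ, mul_comm]
      rw [hprodeq, show T^[n+1] = T ∘ T^[n] from Function.iterate_succ' T n]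
      exact hcomp
  have hFle : ∀ w : ℝ, 0 < w → w ≤ 1 → FIM α w ≤ w ^ ((1:ℝ)+α) := by
    intro w hw0 hw1
    rw [Real.rpow_def_of_pos hw0, FIM, Real.exp_le_exp]
    have hp := mul_nonneg (show (0:ℝ) ≤ 1+α by linarith) (phiIM_nonneg α w hα0 hw0 hw1)
    nlinarith
  have hFge : ∀ w : ℝ, 0 < w → w ≤ 1 → w ^ ((1:ℝ)+α) * Real.exp (-(4:ℝ)) ≤ FIM α w := by
    intro w hw0 hw1
    rw [Real.rpow_def_of_pos hw0, FIM, ← Real.exp_add, Real.exp_le_exp]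
    have hφ2 := phiIM_le_two α w hα0 hα1 hw0 hw1
    have hp := mul_le_mul_of_nonneg_left hφ2 (show (0:ℝ) ≤ 1+α by linarith)
    nlinarith
  have hFchain : ∀ k : ℕ, k ≤ m → (∀ i, i < k → T^[i] z ≠ 1/2) →
      FIM α (T^[k] z) ≤ (∏ i ∈ Finset.range k, |T' (T^[i] z)|) * FIM α z := by
    intro k
    induction k with
    | zero => intro _ _; simp
    | succ n ih =>
      intro hkm hk
      have hn := ih (by omega) (fun i hi => hk i (by omega))
      have hx0 := hIoc n (by omega)
      have hx1 := (horb n).2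
      have hTsucc : T (T^[n] z) = T^[n+1] z := (Function.iterate_succ_apply' T n z).symm
      have hTx0 : 0 < T (T^[n] z) := by rw [hTsucc]; exact hIoc (n+1) hkm
      have hTx1 : T (T^[n] z) ≤ 1 := by rw [hTsucc]; exact (horb (n+1)).2
      have hs := hstep (T^[n] z) hx0 hx1 (hk n (by omega)) hTx0 hTx1
      rw [Function.iterate_succ_apply', Finset.prod_range_succ]
      calc FIM α (T (T^[n] z)) ≤ |T' (T^[n] z)| * FIM α (T^[n] z) := hs
        _ ≤ |T' (T^[n] z)| * ((∏ i ∈ Finset.range n, |T' (T^[i] z)|) * FIM α z) :=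
            mul_le_mul_of_nonneg_left hn (abs_nonneg _)
        _ = ((∏ i ∈ Finset.range n, |T' (T^[i] z)|) * |T' (T^[n] z)|) * FIM α z := by ring
  have hFzpos : 0 < FIM α z := Real.exp_pos _
  have he2 : (4:ℝ) ≤ Real.exp 2 := by
    have h1 : (2:ℝ) ≤ Real.exp 1 := by
      have := Real.add_one_le_exp (1:ℝ); linarith
    have h2 : Real.exp 2 = Real.exp 1 * Real.exp 1 := by
      rw [← Real.exp_add]; norm_num
    nlinarith
  have hexp2 : Real.exp (-(2:ℝ)) ≤ 1/4 := by
    rw [Real.exp_neg]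
    have h4 : Real.exp 2 * (Real.exp 2)⁻¹ = 1 := mul_inv_cancel₀ (Real.exp_pos 2).ne'
    nlinarith [inv_nonneg.mpr (Real.exp_pos 2).le, he2]
  have hzp : 0 < z ^ ((1:ℝ)+α) := Real.rpow_pos_of_pos hz0 _
  by_cases hhalf : ∃ i, i < m ∧ T^[i] z = 1/2
  · -- some orbit point hits 1/2
    obtain ⟨hkm, hzk⟩ := Nat.find_spec hhalf
    set k := Nat.find hhalf with hkdef
    have hmin : ∀ j, j < k → T^[j] z ≠ 1/2 := by
      intro j hj hbad
      exact Nat.find_min hhalf hj ⟨by omega, hbad⟩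
    have hTk1 : T^[k+1] z = T (1/2) := by rw [Function.iterate_succ_apply', hzk]
    have hcont : ContinuousOn T (Icc (1/2:ℝ) 1) := hT_C2.continuousOn
    have hhalfmem : (1/2:ℝ) ∈ Icc (1/2:ℝ) 1 := by norm_num
    have hThalf : T (1/2:ℝ) = 0 ∨ T (1/2:ℝ) = 1 := by
      by_contra hcon
      push_neg at hcon
      obtain ⟨hc0, hc1⟩ := hcon
      have hcmem : T (1/2:ℝ) ∈ Icc (0:ℝ) 1 := hT_bij.mapsTo hhalfmem
      obtain ⟨a, ha, haT⟩ := hT_bij.surjOn (show (0:ℝ) ∈ Icc (0:ℝ) 1 by norm_num)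
      obtain ⟨b, hb, hbT⟩ := hT_bij.surjOn (show (1:ℝ) ∈ Icc (0:ℝ) 1 by norm_num)
      have hane : a ≠ 1/2 := by intro h; rw [h] at haT; exact hc0 haT
      have hbne : b ≠ 1/2 := by intro h; rw [h] at hbT; exact hc1 hbT
      have ha2 : 1/2 < a := lt_of_le_of_ne ha.1 (Ne.symm hane)
      have hb2 : 1/2 < b := lt_of_le_of_ne hb.1 (Ne.symm hbne)
      have hsub : uIcc a b ⊆ Icc (1/2:ℝ) 1 := uIcc_subset_Icc ha hb
      have hmemc : T (1/2:ℝ) ∈ uIcc (T a) (T b) := by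
        rw [haT, hbT, uIcc_of_le (by norm_num : (0:ℝ) ≤ 1)]
        exact hcmem
      obtain ⟨p, hp, hpT⟩ := intermediate_value_uIcc (hcont.mono hsub) hmemc
      have hpeq : p = 1/2 := hT_bij.injOn (hsub hp) hhalfmem hpT
      rw [hpeq] at hp
      rcases le_total a b with hab | hab
      · rw [uIcc_of_le hab] at hp; linarith [hp.1]
      · rw [uIcc_of_ge hab] at hp; linarith [hp.1]
    have hTone : T (1/2:ℝ) = 1 → T 1 = 0 := by
      intro h12
      by_contra hT1ne
      have h1mem : (1:ℝ) ∈ Icc (1/2:ℝ) 1 := by norm_num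
      have hd : T 1 ∈ Icc (0:ℝ) 1 := hT_bij.mapsTo h1mem
      have hd0 : 0 < T 1 := lt_of_le_of_ne hd.1 (Ne.symm hT1ne)
      obtain ⟨a, ha, haT⟩ := hT_bij.surjOn (show (0:ℝ) ∈ Icc (0:ℝ) 1 by norm_num)
      have hane : a ≠ 1/2 := by intro h; rw [h, h12] at haT; norm_num at haT
      obtain ⟨p, hp, hpT⟩ := intermediate_value_Icc' ha.1
        (hcont.mono (Icc_subset_Icc le_rfl ha.2))
        (show T 1 / 2 ∈ Icc (T a) (T (1/2:ℝ)) by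
          rw [haT, h12]; exact ⟨by positivity, by linarith [hd.2]⟩)
      obtain ⟨q, hq, hqT⟩ := intermediate_value_Icc ha.2
        (hcont.mono (Icc_subset_Icc ha.1 le_rfl))
        (show T 1 / 2 ∈ Icc (T a) (T 1) by rw [haT]; exact ⟨by positivity, by linarith⟩)
      have hpq : p = q := hT_bij.injOn (Icc_subset_Icc le_rfl ha.2 hp)
        (Icc_subset_Icc ha.1 le_rfl hq) (by rw [hpT, hqT])
      have hpa : p = a := le_antisymm hp.2 (hpq ▸ hq.1)
      rw [hpa, haT] at hpT
      linarith [hd0]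
    rcases hThalf with h120 | h121
    · exact absurd (by rw [hTk1, h120] : T^[k+1] z = 0) (hne0 (k+1) (by omega))
    · by_cases hk1 : k+1 < m
      · exfalso
        apply hne0 (k+2) (by omega)
        rw [show k+2 = (k+1)+1 by ring, Function.iterate_succ_apply', hTk1, h121, hTone h121]
      · have hkm1 : m = k + 1 := by omega
        have hgD := hchainD k hmin
        set D : ℝ := ∏ i ∈ Finset.range k, T' (T^[i] z) with hDdef
        have hDne : D ≠ 0 := by
          rw [hDdef]
          apply Finset.prod_ne_zero_iff.mpr
          intro i hi
          have hik : i < k := Finset.mem_range.mp hi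
          exact hT'ne0 _ (hIoc i (by omega)) (horb i).2 (hmin i hik)
        have hzm1 : T^[m] z = 1 := by
          rw [hkm1, Function.iterate_succ_apply', hzk, h121]
        have hslope_bound : ∀ y : ℝ, 0 < y → y ≤ 1 → y ≠ 1/2 → |y - 1/2| ≤ |T y - 1| := by
          intro y hy0 hy1 hyne
          rcases lt_or_gt_of_ne hyne with hlt | hgt
          · have hu1 : (2*y) ^ α ≤ 1 := Real.rpow_le_one (by linarith) (by linarith) hα0.le
            have hu0 : 0 ≤ (2*y) ^ α := Real.rpow_nonneg (by linarith) α
            have hTy : T y = y * (1+(2*y)^α) := hTleft y hy0 hlt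
            have h2 : T y ≤ y + 1/2 := by
              rw [hTy]
              nlinarith [mul_le_mul_of_nonneg_left hu1 hy0.le]
            rw [abs_of_nonpos (by linarith : y - 1/2 ≤ 0),
              abs_of_nonpos (by linarith : T y - 1 ≤ 0)]
            linarith
          · obtain ⟨c, hc, hceq⟩ := exists_hasDerivAt_eq_slope T T' hgt
              (hcont.mono (Icc_subset_Icc le_rfl hy1))
              (fun w hw => hT_deriv w ⟨by linarith [hw.1], by linarith [hw.2]⟩ (ne_of_gt hw.1))
            have hcexp := hT_expanding c ⟨hc.1.le, by linarith [hc.2]⟩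
            rw [h121] at hceq
            have hne2 : y - 1/2 ≠ 0 := sub_ne_zero.mpr (ne_of_gt hgt)
            have h3 : T y - 1 = T' c * (y - 1/2) := by
              rw [hceq, div_mul_cancel₀ _ hne2]
            rw [h3, abs_mul]
            calc |y - 1/2| = 1 * |y - 1/2| := (one_mul _).symm
              _ ≤ |T' c| * |y - 1/2| := mul_le_mul_of_nonneg_right hcexp.le (abs_nonneg _)
        have hslope1 : Tendsto (slope (T^[k]) z) (nhdsWithin z {z}ᶜ) (nhds D) :=
          hasDerivAt_iff_tendsto_slope.mp hgD
        have hslope2 : Tendsto (slope (T^[m]) z) (nhdsWithin z {z}ᶜ) (nhds Dm) :=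
          hasDerivAt_iff_tendsto_slope.mp hD
        have hev1 : ∀ᶠ t in nhdsWithin z {z}ᶜ, T^[k] t ∈ Ioo (1/4:ℝ) (3/4) := by
          have hcont2 : ContinuousAt (T^[k]) z := hgD.continuousAt
          have hmem : Ioo (1/4:ℝ) (3/4) ∈ nhds (T^[k] z) := by
            rw [hzk]; exact isOpen_Ioo.mem_nhds (by norm_num)
          exact (hcont2.tendsto.eventually_mem hmem).filter_mono nhdsWithin_le_nhds
        have hev2 : ∀ᶠ t in nhdsWithin z {z}ᶜ, slope (T^[k]) z t ≠ 0 :=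
          hslope1.eventually_ne hDne
        have hev3 : ∀ᶠ t in nhdsWithin z {z}ᶜ, t ≠ z := by
          filter_upwards [self_mem_nhdsWithin] with t ht using ht
        have hle : ∀ᶠ t in nhdsWithin z {z}ᶜ, |slope (T^[k]) z t| ≤ |slope (T^[m]) z t| := by
          filter_upwards [hev1, hev2, hev3] with t h1 h2 h3
          have hy0 : (0:ℝ) < T^[k] t := lt_trans (by norm_num) h1.1
          have hy1 : T^[k] t ≤ 1 := le_trans h1.2.le (by norm_num)
          have hyne : T^[k] t ≠ 1/2 := by
            intro hhalfeq
            apply h2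
            rw [slope_def_field, hhalfeq, hzk]
            simp
          have hm' : T^[m] t = T (T^[k] t) := by rw [hkm1, Function.iterate_succ_apply']
          have hsl := hslope_bound (T^[k] t) hy0 hy1 hyne
          rw [slope_def_field, slope_def_field, hm', hzm1, hzk, abs_div, abs_div]
          have htz : 0 < |t - z| := abs_pos.mpr (sub_ne_zero.mpr h3)
          exact (div_le_div_iff_of_pos_right htz).mpr hsl
        have hDleDm : |D| ≤ |Dm| :=
          le_of_tendsto_of_tendsto hslope1.abs hslope2.abs hle
        have hFc := hFchain k (by omega) hmin
        rw [hzk] at hFc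
        have habsD : ∏ i ∈ Finset.range k, |T' (T^[i] z)| = |D| := by
          rw [hDdef, Finset.abs_prod]
        have hF12 : (1/4:ℝ) * Real.exp (-(4:ℝ)) ≤ FIM α (1/2 : ℝ) := by
          have hb := hFge (1/2) (by norm_num) (by norm_num)
          have hq : (1/4:ℝ) ≤ (1/2:ℝ) ^ ((1:ℝ)+α) := by
            have h2 : ((1/2:ℝ)) ^ ((2:ℕ):ℝ) = 1/4 := by
              rw [Real.rpow_natCast]; norm_num
            calc (1/4:ℝ) = (1/2:ℝ) ^ ((2:ℕ):ℝ) := h2.symm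
              _ ≤ (1/2:ℝ) ^ ((1:ℝ)+α) := Real.rpow_le_rpow_of_exponent_ge (by norm_num)
                  (by norm_num) (by push_cast; linarith)
          calc (1/4:ℝ) * Real.exp (-(4:ℝ)) ≤ (1/2:ℝ)^((1:ℝ)+α) * Real.exp (-(4:ℝ)) :=
                mul_le_mul_of_nonneg_right hq (Real.exp_pos _).le
            _ ≤ FIM α (1/2:ℝ) := hb
        have h1 : (1/4:ℝ) * Real.exp (-(4:ℝ)) ≤ |Dm| * z ^ ((1:ℝ)+α) := by
          calc (1/4:ℝ) * Real.exp (-(4:ℝ)) ≤ FIM α (1/2:ℝ) := hF12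
            _ ≤ (∏ i ∈ Finset.range k, |T' (T^[i] z)|) * FIM α z := hFc
            _ = |D| * FIM α z := by rw [habsD]
            _ ≤ |Dm| * FIM α z := mul_le_mul_of_nonneg_right hDleDm hFzpos.le
            _ ≤ |Dm| * z ^ ((1:ℝ)+α) :=
                mul_le_mul_of_nonneg_left (hFle z hz0 hz1) (abs_nonneg _)
        rw [hzm1, Real.div_rpow (by norm_num) hz0.le, Real.one_rpow,
          show Real.exp (-6) * (1 / z^((1:ℝ)+α)) = Real.exp (-6) / z^((1:ℝ)+α) by ring,
          div_le_iff₀ hzp]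
        calc Real.exp (-6) = Real.exp (-(2:ℝ)) * Real.exp (-(4:ℝ)) := by
              rw [← Real.exp_add]; norm_num
          _ ≤ (1/4) * Real.exp (-(4:ℝ)) := mul_le_mul_of_nonneg_right hexp2 (Real.exp_pos _).le
          _ ≤ |Dm| * z ^ ((1:ℝ)+α) := h1
  · -- no orbit point hits 1/2
    push_neg at hhalf
    have hprod := hchainD m hhalf
    have hDval : Dm = ∏ i ∈ Finset.range m, T' (T^[i] z) := hD.unique hprod
    have habsD : |Dm| = ∏ i ∈ Finset.range m, |T' (T^[i] z)| := by
      rw [hDval, Finset.abs_prod]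
    have hFc := hFchain m le_rfl hhalf
    have hZ0 : 0 < T^[m] z := hIoc m le_rfl
    have hZ1 : T^[m] z ≤ 1 := (horb m).2
    have h1 : (T^[m] z) ^ ((1:ℝ)+α) * Real.exp (-(4:ℝ)) ≤ |Dm| * (z ^ ((1:ℝ)+α)) := by
      calc (T^[m] z) ^ ((1:ℝ)+α) * Real.exp (-(4:ℝ)) ≤ FIM α (T^[m] z) := hFge _ hZ0 hZ1
        _ ≤ (∏ i ∈ Finset.range m, |T' (T^[i] z)|) * FIM α z := hFc
        _ = |Dm| * FIM α z := by rw [habsD]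
        _ ≤ |Dm| * z ^ ((1:ℝ)+α) := mul_le_mul_of_nonneg_left (hFle z hz0 hz1) (abs_nonneg Dm)
    rw [Real.div_rpow hZ0.le hz0.le,
      show Real.exp (-6) * ((T^[m] z)^((1:ℝ)+α) / z^((1:ℝ)+α))
        = (Real.exp (-6) * (T^[m] z)^((1:ℝ)+α)) / z^((1:ℝ)+α) by ring,
      div_le_iff₀ hzp]
    calc Real.exp (-6) * (T^[m] z)^((1:ℝ)+α)
        = Real.exp (-(2:ℝ)) * ((T^[m] z)^((1:ℝ)+α) * Real.exp (-(4:ℝ))) := by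
          rw [show (-6:ℝ) = -2 + -4 by norm_num, Real.exp_add]; ring
      _ ≤ 1 * (|Dm| * z^((1:ℝ)+α)) := by
          apply mul_le_mul (by linarith [hexp2]) h1 (by positivity) (by norm_num)
      _ = |Dm| * z^((1:ℝ)+α) := one_mul _
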